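/- arXiv:2103.04603 — 4 statements merged into one kernel-verified Lean document; each statement's English description precedes it below -/
import Mathlib

section
/- Let V be a finite-dimensional real vector space with a symmetric bilinear form (x·y) satisfying the Hodge index property: whenever x·x > 0 and x·y = 0, one has y·y ≤ 0. Let L, H, C ∈ V satisfy: L·L > 0, L·H ≥ 0, (2(L·H)/(L·L))L − H is a vector A with A·A ≥ 0 and A·C ≥ 0, H·(L − C) ≥ 0, and, in case (L·H)/(L·L) L − H = 0, additionally C·H = ((L·H)/(L·L))(C·L). Then 2(C·L)(L·H) − (C·H)(L·L) − (L·H)(C·C) ≥ 0. -/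
set_option maxHeartbeats 1000000 in

/-- Abstract form of Proposition 5.1: key intersection-theoretic inequality on
surfaces, under the Hodge index property. -/
theorem stmt1 (V : Type*) [AddCommGroup V] [Module ℝ V]
    (q : LinearMap.BilinForm ℝ V) (hsym : ∀ x y, q x y = q y x)
    (hodge : ∀ x y, 0 < q x x → q x y = 0 → q y y ≤ 0)
    (L H C : V)
    (hLL : 0 < q L L) (hLH : 0 ≤ q L H)
    (A : V) (hA : A = (2 * q L H / q L L) • L - H)
    (hAA : 0 ≤ q A A) (hAC : 0 ≤ q A C)
    (hHLC : 0 ≤ q H (L - C))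
    (hdeg : (q L H / q L L) • L - H = 0 → q C H = (q L H / q L L) * q C L) :
    0 ≤ 2 * q C L * q L H - q C H * q L L - q L H * q C C := by
  have hd0 : q L L ≠ 0 := ne_of_gt hLL
  have sCL : q C L = q L C := hsym C L
  have sHL : q H L = q L H := hsym H L
  have sHC : q H C = q C H := hsym H C
  -- notation
  set d := q L L with hd
  set a := q L H with ha
  set c := q L C with hc
  set h := q C H with hh
  set HH := q H H with hHH
  set s := q C C with hs
  clear_value d a c h HH s
  -- A·A = H·H
  have F1 : 0 ≤ HH := by
    have : q A A = HH := by
      rw [hA]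
      simp only [map_sub, map_smul, LinearMap.sub_apply, LinearMap.smul_apply, smul_eq_mul,
        ← hd, ← ha, ← hHH, sHL]
      field_simp
      ring
    linarith [this ▸ hAA]
  -- A·C ≥ 0 scaled by d
  have F2 : 0 ≤ 2 * a * c - d * h := by
    have hAC' : q A C = 2 * a / d * c - h := by
      rw [hA]
      simp only [map_sub, map_smul, LinearMap.sub_apply, LinearMap.smul_apply, smul_eq_mul,
        ← hc, sHC]
    rw [hAC'] at hAC
    have h1 := mul_nonneg hAC hLL.le
    have he : (2 * a / d * c - h) * d = 2 * a * c - d * h := by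
      field_simp
    linarith [he ▸ h1]
  -- H·(L−C) ≥ 0
  have F3 : h ≤ a := by
    have : q H (L - C) = a - h := by
      simp only [map_sub, sHL, sHC]
    linarith [this ▸ hHLC]
  -- Hodge with w = d•C − c•L
  have F4 : d * s ≤ c * c := by
    have hLw : q L ((d : ℝ) • C - c • L) = 0 := by
      simp only [map_sub, map_smul, smul_eq_mul, ← hc, ← hd]; ring
    have := hodge L _ (hd ▸ hLL) hLw
    have hww : q ((d : ℝ) • C - c • L) ((d : ℝ) • C - c • L) = d * d * s - d * (c * c) := by
      simp only [map_sub, map_smul, LinearMap.sub_apply, LinearMap.smul_apply, smul_eq_mul,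
        ← hd, ← hc, ← hs, sCL]
      ring
    rw [hww] at this
    nlinarith
  -- Hodge with z = d•H − a•L
  have F5 : d * HH ≤ a * a := by
    have hLz : q L ((d : ℝ) • H - a • L) = 0 := by
      simp only [map_sub, map_smul, smul_eq_mul, ← ha, ← hd]; ring
    have := hodge L _ (hd ▸ hLL) hLz
    have hzz : q ((d : ℝ) • H - a • L) ((d : ℝ) • H - a • L) = d * d * HH - d * (a * a) := by
      simp only [map_sub, map_smul, LinearMap.sub_apply, LinearMap.smul_apply, smul_eq_mul,
        ← hd, ← ha, ← hHH, sHL]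
      ring
    rw [hzz] at this
    nlinarith
  -- Cauchy–Schwarz on L^⊥
  have F6 : (d * h - a * c) ^ 2 ≤ (c * c - d * s) * (a * a - d * HH) := by
    have hww : q ((d : ℝ) • C - c • L) ((d : ℝ) • C - c • L) = d * (d * s - c * c) := by
      simp only [map_sub, map_smul, LinearMap.sub_apply, LinearMap.smul_apply, smul_eq_mul,
        ← hd, ← hc, ← hs, sCL]
      ring
    have hzz : q ((d : ℝ) • H - a • L) ((d : ℝ) • H - a • L) = d * (d * HH - a * a) := by
      simp only [map_sub, map_smul, LinearMap.sub_apply, LinearMap.smul_apply, smul_eq_mul,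
        ← hd, ← ha, ← hHH, sHL]
      ring
    have key : ∀ t : ℝ, 0 ≤ (-(d * (d * HH - a * a))) * (t * t)
        + (-(2 * (d * (d * h - a * c)))) * t + (-(d * (d * s - c * c))) := by
      intro t
      have hLwt : q L (((d : ℝ) • C - c • L) + t • ((d : ℝ) • H - a • L)) = 0 := by
        simp only [map_add, map_sub, map_smul, smul_eq_mul, ← hd, ← ha, ← hc]
        ring
      have h0 := hodge L _ (hd ▸ hLL) hLwt
      have hexp : q (((d : ℝ) • C - c • L) + t • ((d : ℝ) • H - a • L))
          (((d : ℝ) • C - c • L) + t • ((d : ℝ) • H - a • L))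
          = d * (d * s - c * c) + 2 * t * (d * (d * h - a * c))
            + t * t * (d * (d * HH - a * a)) := by
        simp only [map_add, map_sub, map_smul, LinearMap.add_apply, LinearMap.sub_apply,
          LinearMap.smul_apply, smul_eq_mul, ← hd, ← ha, ← hc, ← hh, ← hs, ← hHH,
          sCL, sHL, sHC]
        ring
      rw [hexp] at h0
      linarith
    have hdis := discrim_le_zero key
    unfold discrim at hdis
    nlinarith [sq_nonneg d, mul_pos hLL hLL]
  -- conclude
  rw [sCL]
  rcases le_or_gt s 0 with hs0 | hs0
  · nlinarith [mul_nonneg hLH (neg_nonneg.2 hs0)]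
  · rcases eq_or_lt_of_le hLH with ha0 | ha0
    · nlinarith
    · by_contra hcon
      push_neg at hcon
      have key2 : a * a * (d * s) ≤ (d * h) * (2 * a * c - d * h) := by
        nlinarith [mul_nonneg (mul_nonneg hLL.le F1) (sub_nonneg.2 F4)]
      have hpos : 0 < a * a * (d * s) := mul_pos (mul_pos ha0 ha0) (mul_pos hLL hs0)
      have hdh : 0 < d * h := by
        by_contra hx
        push_neg at hx
        nlinarith [mul_nonneg (neg_nonneg.2 hx) F2]
      have h5 : (d * h) * (2 * a * c - d * h) < (d * h) * (a * s) := by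
        apply mul_lt_mul_of_pos_left _ hdh
        linarith
      have h6 : (d * h) * (a * s) ≤ (d * a) * (a * s) :=
        mul_le_mul_of_nonneg_right (mul_le_mul_of_nonneg_left F3 hLL.le)
          (mul_nonneg hLH hs0.le)
      nlinarith [key2, h5, h6]
end

section
/- Let M be a finite-dimensional real vector space, C ⊆ M a polytope (compact convex hull of finitely many points), σ ⊆ M a closed convex cone with σ ∩ (−σ) = {0}, and P = C + σ. Then for every x ∈ P there exists a point y lying on a face of C that is also a face of P, such that x − y ∈ σ. -/
open Pointwise

/-- `F` is a face of the convex set `K`: either `K` itself or the intersection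
of `K` with a supporting hyperplane. -/
def IsFace {M : Type*} [AddCommGroup M] [Module ℝ M] (K F : Set M) : Prop :=
  F = K ∨ ∃ (ℓ : M →ₗ[ℝ] ℝ) (r : ℝ), (∀ z ∈ K, ℓ z ≤ r) ∧ F = {z ∈ K | ℓ z = r}

section Aux

variable {E : Type*} [NormedAddCommGroup E] [NormedSpace ℝ E] [FiniteDimensional ℝ E]

/-- The cone of nonnegative combinations of the vectors `w i`, `i ∈ A`. -/
def coneOf {ι : Type*} [Fintype ι] (w : ι → E) (A : Finset ι) : Set E :=
  {z : E | ∃ f : ι → ℝ, (∀ i ∈ A, 0 ≤ f i) ∧ z = ∑ i ∈ A, f i • w i}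

lemma sum_coe_finset {ι β : Type*} [AddCommMonoid β] (B : Finset ι) (F : ι → β) :
    ∑ i : B, F i = ∑ i ∈ B, F i := by
  rw [Finset.univ_eq_attach]; exact Finset.sum_attach _ _

lemma coneOf_carath {ι : Type*} [Fintype ι] (w : ι → E) :
    ∀ (n : ℕ) (A : Finset ι), A.card ≤ n → ∀ z ∈ coneOf w A,
      ∃ B : Finset ι, B ⊆ A ∧ LinearIndependent ℝ (fun i : B => w i) ∧ z ∈ coneOf w B := by
  classical
  intro n
  induction n with
  | zero =>
    intro A hA z hz
    have hAe : A = ∅ := Finset.card_eq_zero.mp (Nat.le_zero.mp hA)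
    subst hAe
    haveI : IsEmpty ((∅ : Finset ι) : Type _) := ⟨fun i => Finset.notMem_empty _ i.2⟩
    exact ⟨∅, subset_rfl, linearIndependent_empty_type, hz⟩
  | succ n IH =>
    intro A hA z hz
    by_cases hind : LinearIndependent ℝ (fun i : A => w i)
    · exact ⟨A, subset_rfl, hind, hz⟩
    obtain ⟨f, hf, rfl⟩ := hz
    obtain ⟨g0, hg0sum, i₂, hg0i₂⟩ := Fintype.not_linearIndependent_iff.mp hind
    set gE : ι → ℝ := fun i => if h : i ∈ A then g0 ⟨i, h⟩ else 0 with hgE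
    have hgEsum : ∑ i ∈ A, gE i • w i = 0 := by
      rw [← sum_coe_finset A (fun i => gE i • w i)]
      rw [← hg0sum]
      exact Finset.sum_congr rfl fun i _ => by simp [hgE, i.2]
    have hgEex : ∃ i ∈ A, gE i ≠ 0 := ⟨i₂, i₂.2, by simpa [hgE, i₂.2] using hg0i₂⟩
    -- get a coefficient vector with a positive entry
    obtain ⟨p, hpsum, i₁, hi₁A, hp₁⟩ :
        ∃ p : ι → ℝ, (∑ i ∈ A, p i • w i = 0) ∧ ∃ i ∈ A, 0 < p i := by
      by_cases hpos : ∃ i ∈ A, 0 < gE i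
      · exact ⟨gE, hgEsum, hpos⟩
      · push_neg at hpos
        obtain ⟨i, hiA, hine⟩ := hgEex
        refine ⟨-gE, ?_, i, hiA, ?_⟩
        · rw [← neg_eq_zero, ← hgEsum, ← Finset.sum_neg_distrib]
          exact Finset.sum_congr rfl fun j _ => by rw [Pi.neg_apply, neg_smul, neg_neg]
        · have := hpos i hiA
          simp only [Pi.neg_apply]
          cases lt_or_eq_of_le this with
          | inl h => linarith
          | inr h => exact absurd h hine
    set T := A.filter (fun i => 0 < p i) with hT
    obtain ⟨i₀, hi₀T, hmin⟩ := T.exists_min_image (fun i => f i / p i)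
      ⟨i₁, Finset.mem_filter.mpr ⟨hi₁A, hp₁⟩⟩
    have hi₀A : i₀ ∈ A := (Finset.mem_filter.mp hi₀T).1
    have hp₀ : 0 < p i₀ := (Finset.mem_filter.mp hi₀T).2
    set c := f i₀ / p i₀ with hc
    have hc0 : 0 ≤ c := div_nonneg (hf _ hi₀A) hp₀.le
    set f' : ι → ℝ := fun i => f i - c * p i with hf'
    have hf'nonneg : ∀ i ∈ A, 0 ≤ f' i := by
      intro i hi
      by_cases hpi : 0 < p i
      · have h1 := hmin i (Finset.mem_filter.mpr ⟨hi, hpi⟩)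
        rw [le_div_iff₀ hpi] at h1
        simp only [hf']
        linarith
      · push_neg at hpi
        have : c * p i ≤ 0 := mul_nonpos_of_nonneg_of_nonpos hc0 hpi
        have := hf i hi
        simp only [hf']
        linarith
    have hf'i₀ : f' i₀ = 0 := by
      simp only [hf', hc]
      rw [div_mul_cancel₀ _ hp₀.ne']
      ring
    have hsum' : ∑ i ∈ A.erase i₀, f' i • w i = ∑ i ∈ A, f i • w i := by
      rw [Finset.sum_erase _ (by rw [hf'i₀, zero_smul])]
      have : ∑ i ∈ A, f' i • w i = ∑ i ∈ A, f i • w i - c • ∑ i ∈ A, p i • w i := by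
        rw [Finset.smul_sum, ← Finset.sum_sub_distrib]
        exact Finset.sum_congr rfl fun i _ => by rw [hf', sub_smul, smul_smul]
      rw [this, hpsum, smul_zero, sub_zero]
    have hcard : (A.erase i₀).card ≤ n := by
      have h1 := Finset.card_erase_of_mem hi₀A
      have h2 : 1 ≤ A.card := Finset.card_pos.mpr ⟨i₀, hi₀A⟩
      omega
    obtain ⟨B, hB1, hB2, hB3⟩ := IH (A.erase i₀) hcard _
      ⟨f', fun i hi => hf'nonneg i (Finset.mem_of_mem_erase hi), rfl⟩
    exact ⟨B, hB1.trans (Finset.erase_subset _ _), hB2, by rwa [hsum'] at hB3⟩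

lemma coneOf_convex {ι : Type*} [Fintype ι] (w : ι → E) (A : Finset ι) :
    Convex ℝ (coneOf w A) := by
  rintro z₁ ⟨f₁, hf₁, rfl⟩ z₂ ⟨f₂, hf₂, rfl⟩ a b ha hb hab
  refine ⟨fun i => a * f₁ i + b * f₂ i,
    fun i hi => add_nonneg (mul_nonneg ha (hf₁ i hi)) (mul_nonneg hb (hf₂ i hi)), ?_⟩
  rw [Finset.smul_sum, Finset.smul_sum, ← Finset.sum_add_distrib]
  exact Finset.sum_congr rfl fun i _ => by rw [smul_smul, smul_smul, add_smul]

lemma coneOf_isClosed {ι : Type*} [Fintype ι] (w : ι → E) (A : Finset ι) :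
    IsClosed (coneOf w A) := by
  classical
  have key : coneOf w A =
      ⋃ B ∈ {B : Finset ι | B ⊆ A ∧ LinearIndependent ℝ (fun i : B => w i)}, coneOf w B := by
    ext z
    simp only [Set.mem_iUnion, Set.mem_setOf_eq, exists_prop]
    constructor
    · intro hz
      obtain ⟨B, h1, h2, h3⟩ := coneOf_carath w A.card A le_rfl z hz
      exact ⟨B, ⟨h1, h2⟩, h3⟩
    · rintro ⟨B, ⟨hBA, -⟩, f, hf, rfl⟩
      refine ⟨fun i => if i ∈ B then f i else 0, fun i _ => ?_, ?_⟩
      · by_cases h : i ∈ B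
        · simpa [h] using hf i h
        · simp [h]
      · rw [← Finset.sum_subset hBA (fun x _ hxB => by simp [hxB])]
        exact Finset.sum_congr rfl fun i hi => by simp [hi, hf i hi]
  rw [key]
  apply Set.Finite.isClosed_biUnion (Set.toFinite _)
  rintro B ⟨hBA, hBind⟩
  set φ : (↥B → ℝ) →ₗ[ℝ] E :=
    { toFun := fun f => ∑ i : B, f i • w i
      map_add' := fun f g => by
        simp only [Pi.add_apply, add_smul]
        rw [Finset.sum_add_distrib]
      map_smul' := fun c f => by
        simp only [Pi.smul_apply, smul_eq_mul, RingHom.id_apply]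
        rw [Finset.smul_sum]
        exact Finset.sum_congr rfl fun i _ => by rw [smul_smul] } with hφ
  have hker : LinearMap.ker φ = ⊥ :=
    LinearMap.ker_eq_bot'.mpr fun m hm =>
      funext fun i => Fintype.linearIndependent_iff.mp hBind m hm i
  have hemb := LinearMap.isClosedEmbedding_of_injective hker
  have horth : IsClosed {f : ↥B → ℝ | ∀ i, 0 ≤ f i} := by
    have : {f : ↥B → ℝ | ∀ i, 0 ≤ f i} = ⋂ i, {f | 0 ≤ f i} := by
      ext f; simp [Set.mem_iInter]
    rw [this]
    exact isClosed_iInter fun i => isClosed_le continuous_const (continuous_apply i)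
  have himg : coneOf w B = φ '' {f : ↥B → ℝ | ∀ i, 0 ≤ f i} := by
    ext z
    constructor
    · rintro ⟨f, hf, rfl⟩
      refine ⟨fun i => f i, fun i => hf i i.2, ?_⟩
      show ∑ i : B, f i • w i = _
      rw [sum_coe_finset B (fun i => f i • w i)]
    · rintro ⟨f, hf, rfl⟩
      refine ⟨fun i => if h : i ∈ B then f ⟨i, h⟩ else 0, fun i hi => by simp only []; rw [dif_pos hi]; exact hf _, ?_⟩
      show _ = ∑ i ∈ B, _
      rw [← sum_coe_finset B (fun i => (if h : i ∈ B then f ⟨i, h⟩ else 0) • w i)]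
      exact Finset.sum_congr rfl fun i _ => by simp [i.2]
  rw [himg]
  exact hemb.isClosedMap _ horth

lemma isCompact_convexHull_fd {K : Set E} (hK : IsCompact K) :
    IsCompact (convexHull ℝ K) := by
  classical
  rcases K.eq_empty_or_nonempty with rfl | ⟨k₀, hk₀⟩
  · simp
  set N := Module.finrank ℝ E + 1 with hN
  set Φ : (Fin N → ℝ) × (Fin N → E) → E := fun p => ∑ i, p.1 i • p.2 i with hΦdef
  have hΦ : Continuous Φ :=
    continuous_finset_sum _ fun i _ =>
      (((continuous_apply i).comp continuous_fst).smul ((continuous_apply i).comp continuous_snd))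
  set S : Set ((Fin N → ℝ) × (Fin N → E)) :=
    (stdSimplex ℝ (Fin N)) ×ˢ (Set.univ.pi fun _ : Fin N => K) with hSdef
  have hS : IsCompact S :=
    (isCompact_stdSimplex _ _).prod (isCompact_univ_pi fun _ => hK)
  have heq : convexHull ℝ K = Φ '' S := by
    apply Set.Subset.antisymm
    · intro x hx
      obtain ⟨ι', hft, z, wt, hrange, hai, hpos, hsum1, hsum⟩ :=
        eq_pos_convex_span_of_mem_convexHull hx

      have hcard : Fintype.card ι' ≤ N := by
        have h1 := hai.card_le_finrank_succ
        have h2 := Submodule.finrank_le (vectorSpan ℝ (Set.range z))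
        omega
      obtain ⟨e⟩ : Nonempty (ι' ↪ Fin N) := by
        rw [Function.Embedding.nonempty_iff_card_le]
        simpa using hcard
      have transfer : ∀ (G : ι' → ℝ) ,
          (∑ j : Fin N, if h : ∃ i, e i = j then G h.choose else 0) = ∑ i, G i := by
        intro G
        rw [← Finset.sum_subset (Finset.subset_univ (Finset.univ.image e))
          (fun j _ hj => dif_neg (by simpa [Finset.mem_image] using hj))]
        rw [Finset.sum_image (fun a _ b _ h => e.injective h)]
        refine Finset.sum_congr rfl fun i _ => ?_
        have hex : ∃ i', e i' = e i := ⟨i, rfl⟩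
        rw [dif_pos hex]
        congr 1
        exact e.injective hex.choose_spec
      set w' : Fin N → ℝ := fun j => if h : ∃ i, e i = j then wt h.choose else 0 with hw'
      set z' : Fin N → E := fun j => if h : ∃ i, e i = j then z h.choose else k₀ with hz'
      refine ⟨(w', z'), ⟨⟨fun j => ?_, ?_⟩, fun j _ => ?_⟩, ?_⟩
      · simp only [hw']
        split
        · exact (hpos _).le
        · exact le_refl 0
      · show ∑ j, w' j = 1
        simp only [hw']
        rw [transfer wt]
        exact hsum1
      · simp only [hz']
        split
        · exact hrange ⟨_, rfl⟩
        · exact hk₀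
      · show Φ (w', z') = x
        simp only [hΦdef]
        have : ∀ j, w' j • z' j = if h : ∃ i, e i = j then wt h.choose • z h.choose else 0 := by
          intro j
          simp only [hw', hz']
          split
          · rfl
          · simp
        calc ∑ j, w' j • z' j
            = ∑ j : Fin N, if h : ∃ i, e i = j then wt h.choose • z h.choose else 0 :=
              Finset.sum_congr rfl fun j _ => this j
          _ = ∑ i, wt i • z i := by
              rw [← Finset.sum_subset (Finset.subset_univ (Finset.univ.image e))
                (fun j _ hj => dif_neg (by simpa [Finset.mem_image] using hj))]
              rw [Finset.sum_image (fun a _ b _ h => e.injective h)]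
              refine Finset.sum_congr rfl fun i _ => ?_
              have hex : ∃ i', e i' = e i := ⟨i, rfl⟩
              rw [dif_pos hex]
              have := e.injective hex.choose_spec
              rw [this]
          _ = x := hsum
    · rintro - ⟨⟨wv, zv⟩, ⟨hw, hz⟩, rfl⟩
      have h1 : ∀ i ∈ Finset.univ, 0 ≤ wv i := fun i _ => hw.1 i
      have h2 : (0:ℝ) < ∑ i, wv i := by rw [hw.2]; exact one_pos
      have h3 : ∀ i ∈ Finset.univ, zv i ∈ K := fun i _ => by
        simpa using hz i trivial
      have := Finset.centerMass_mem_convexHull Finset.univ h1 h2 h3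
      rwa [Finset.centerMass_eq_of_sum_1 _ _ hw.2] at this
  rw [heq]
  exact hS.image hΦ


end Aux

/-- The Claim in Remark 4.6: every point of the conical polyhedron
`P = C + σ` dominates (w.r.t. the salient closed convex cone `σ`) a point of a
face of `C` that is also a face of `P`. -/
theorem stmt11 (M : Type*) [NormedAddCommGroup M] [NormedSpace ℝ M]
    [FiniteDimensional ℝ M]
    (s : Finset M) (C : Set M) (hC : C = convexHull ℝ (s : Set M))
    (σ : Set M)
    (hσclosed : IsClosed σ) (hσconv : Convex ℝ σ)
    (hσcone : ∀ (c : ℝ), 0 ≤ c → ∀ x ∈ σ, c • x ∈ σ)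
    (hσsalient : σ ∩ (-σ) = {0}) :
    ∀ x ∈ C + σ, ∃ F : Set M, IsFace C F ∧ IsFace (C + σ) F ∧
      ∃ y ∈ F, x - y ∈ σ := by
  classical
  have hσ0 : (0:M) ∈ σ := by
    have h0 : (0:M) ∈ ({0} : Set M) := rfl
    rw [← hσsalient] at h0
    exact h0.1
  intro x hx
  by_cases hσtriv : σ = {0}
  · have hCσ : C + σ = C := by rw [hσtriv]; simp [Set.add_singleton]
    refine ⟨C, Or.inl rfl, Or.inl hCσ.symm, x, ?_, ?_⟩
    · rw [← hCσ]; exact hx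
    · rw [sub_self, hσtriv]; rfl
  -- nontrivial cone
  obtain ⟨v₀, hv₀σ, hv₀ne⟩ : ∃ v ∈ σ, v ≠ 0 := by
    by_contra h
    push_neg at h
    exact hσtriv (Set.Subset.antisymm (fun v hv => h v hv) (by simpa using hσ0))
  have hσadd : ∀ a ∈ σ, ∀ b ∈ σ, a + b ∈ σ := by
    intro a ha b hb
    have hm := hσconv ha hb (by norm_num : (0:ℝ) ≤ 1/2) (by norm_num : (0:ℝ) ≤ 1/2) (by norm_num)
    have h2 := hσcone 2 (by norm_num) _ hm
    rwa [smul_add, smul_smul, smul_smul, show (2:ℝ) * (1/2) = 1 by norm_num, one_smul,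
      one_smul] at h2
  -- the compact convex base B
  set K : Set M := σ ∩ Metric.sphere (0:M) 1 with hK
  have hKcpt : IsCompact K :=
    (isCompact_sphere 0 1).of_isClosed_subset (hσclosed.inter Metric.isClosed_sphere)
      Set.inter_subset_right
  set B : Set M := convexHull ℝ K with hB
  have hBcpt : IsCompact B := isCompact_convexHull_fd hKcpt
  have hBconv : Convex ℝ B := convex_convexHull ℝ K
  have hBσ : B ⊆ σ := convexHull_min Set.inter_subset_left hσconv
  have hmemB : ∀ v ∈ σ, v ≠ 0 → ‖v‖⁻¹ • v ∈ B := by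
    intro v hv hne
    refine subset_convexHull ℝ K ⟨hσcone _ (inv_nonneg.mpr (norm_nonneg v)) v hv, ?_⟩
    simp [norm_smul, inv_mul_cancel₀ (norm_ne_zero_iff.mpr hne)]
  have hB0 : (0:M) ∉ B := by
    intro h0
    rw [hB, convexHull_eq] at h0
    obtain ⟨ι', t, wt, zt, hw0, hw1, hzK, hcm⟩ := h0
    rw [Finset.centerMass_eq_of_sum_1 _ _ hw1] at hcm
    obtain ⟨i, hit, hwi⟩ : ∃ i ∈ t, 0 < wt i := by
      by_contra h
      push_neg at h
      have : ∑ i ∈ t, wt i = 0 :=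
        Finset.sum_eq_zero fun i hi => le_antisymm (h i hi) (hw0 i hi)
      rw [hw1] at this
      norm_num at this
    have hmem : wt i • zt i ∈ σ := hσcone _ hwi.le _ (hzK i hit).1
    have heq : ∑ j ∈ t.erase i, wt j • zt j = -(wt i • zt i) := by
      have h1 := Finset.add_sum_erase t (fun j => wt j • zt j) hit
      rw [hcm] at h1
      have := eq_neg_of_add_eq_zero_right h1
      rw [this]
    have hmemneg : -(wt i • zt i) ∈ σ := by
      rw [← heq]
      refine Finset.sum_induction _ (· ∈ σ) (fun a b ha hb => hσadd a ha b hb) hσ0 ?_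
      intro j hj
      exact hσcone _ (hw0 j (Finset.mem_of_mem_erase hj)) _ (hzK j (Finset.mem_of_mem_erase hj)).1
    have hz : wt i • zt i = 0 := by
      have hmm : wt i • zt i ∈ σ ∩ (-σ) := ⟨hmem, Set.mem_neg.mpr hmemneg⟩
      rw [hσsalient] at hmm
      exact hmm
    rcases smul_eq_zero.mp hz with h | h
    · exact hwi.ne' h
    · have := (hzK i hit).2
      rw [h] at this
      simp at this
  -- first separation: a functional positive on B
  obtain ⟨ℓ, u, hu0, hℓB⟩ := geometric_hahn_banach_point_closed hBconv hBcpt.isClosed hB0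
  have hu : 0 < u := by simpa using hu0
  -- the compact set D and the minimizer y
  have hCconv : Convex ℝ C := hC ▸ convex_convexHull ℝ _
  have hCcpt : IsCompact C := hC ▸ (s.finite_toSet.isCompact_convexHull ℝ)
  obtain ⟨c₀, hc₀C, w₀, hw₀σ, hx₀⟩ := hx
  set D : Set M := C ∩ {c | x - c ∈ σ} with hD
  have hDcpt : IsCompact D :=
    hCcpt.inter_right (hσclosed.preimage (continuous_const.sub continuous_id))
  have hDne : D.Nonempty := ⟨c₀, hc₀C, by
    show x - c₀ ∈ σ
    rw [← hx₀, add_sub_cancel_left]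
    exact hw₀σ⟩
  obtain ⟨y, hyD, hymin⟩ := hDcpt.exists_isMinOn hDne ℓ.continuous.continuousOn
  have hyC : y ∈ C := hyD.1
  have hyσ : x - y ∈ σ := hyD.2
  -- the cone R generated by the directions from y to the vertices
  set wdir : {v // v ∈ s} → M := fun i => (i : M) - y with hwdir
  set R : Set M := coneOf wdir Finset.univ with hR
  have hR0 : (0:M) ∈ R := ⟨0, by simp, by simp⟩
  have hBR_closed : IsClosed (B + R) :=
    IsClosed.add_left_of_isCompact (coneOf_isClosed wdir Finset.univ) hBcpt
  have hBRconv : Convex ℝ (B + R) := hBconv.add (coneOf_convex wdir Finset.univ)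
  have h0BR : (0:M) ∉ B + R := by
    rintro ⟨b, hb, r, hr, h0⟩
    obtain ⟨f, hf, rfl⟩ := hr
    set T : ℝ := ∑ i, f i with hT
    have hT0 : 0 ≤ T := Finset.sum_nonneg fun i _ => hf i (Finset.mem_univ i)
    rcases eq_or_lt_of_le hT0 with hTe | hTpos
    · have hzero : ∀ i ∈ Finset.univ, f i = 0 :=
        fun i hi => (Finset.sum_eq_zero_iff_of_nonneg (fun j hj => hf j hj)).mp hTe.symm i hi
      have : ∑ i, f i • wdir i = 0 :=
        Finset.sum_eq_zero fun i hi => by rw [hzero i hi, zero_smul]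
      simp only [this, add_zero] at h0
      rw [h0] at hb
      exact hB0 hb
    · set c : M := Finset.univ.centerMass f (fun i : {v // v ∈ s} => (i : M)) with hc
      have hcC : c ∈ C := by
        rw [hC]
        exact Finset.centerMass_mem_convexHull Finset.univ
          (fun i _ => hf i (Finset.mem_univ i)) hTpos (fun i _ => i.2)
      have hrb : ∑ i, f i • wdir i = -b := eq_neg_of_add_eq_zero_right h0
      have hsum2 : ∑ i, f i • (i : M) = T • y - b := by
        have hterm : ∀ i : {v // v ∈ s}, f i • (i : M) = f i • wdir i + f i • y := by
          intro i
          rw [hwdir]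
          simp only [smul_sub]
          abel
        rw [Finset.sum_congr rfl fun i _ => hterm i, Finset.sum_add_distrib, hrb,
          ← Finset.sum_smul, ← hT]
        abel
      have hceq : c = y - T⁻¹ • b := by
        rw [hc, Finset.centerMass, ← hT, hsum2, smul_sub, smul_smul,
          inv_mul_cancel₀ hTpos.ne', one_smul]
      have hycσ : y - c ∈ σ := by
        have : y - c = T⁻¹ • b := by rw [hceq]; abel
        rw [this]
        exact hσcone _ (inv_nonneg.mpr hT0) b (hBσ hb)
      have hcD : c ∈ D := by
        refine ⟨hcC, ?_⟩
        show x - c ∈ σ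
        have : x - c = (x - y) + (y - c) := by abel
        rw [this]
        exact hσadd _ hyσ _ hycσ
      have hℓc : ℓ c < ℓ y := by
        have h1 : u < ℓ b := hℓB b hb
        have h2 : ℓ c = ℓ y - T⁻¹ * ℓ b := by rw [hceq, map_sub, map_smul, smul_eq_mul]
        have h3 : 0 < T⁻¹ * ℓ b := mul_pos (inv_pos.mpr hTpos) (hu.trans h1)
        linarith
      have := isMinOn_iff.mp hymin c hcD
      linarith
  -- second separation: the supporting functional
  obtain ⟨g, u', hgu', hgBR⟩ := geometric_hahn_banach_point_closed hBRconv hBR_closed h0BR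
  have hu' : 0 < u' := by simpa using hgu'
  have hgσ : ∀ v ∈ σ, v ≠ 0 → 0 < g v := by
    intro v hv hne
    have h1 := hgBR _ (Set.add_mem_add (hmemB v hv hne) hR0)
    rw [add_zero, map_smul, smul_eq_mul] at h1
    have hn : 0 < ‖v‖ := norm_pos_iff.mpr hne
    nlinarith [inv_pos.mpr hn]
  have hb₀B : ‖v₀‖⁻¹ • v₀ ∈ B := hmemB v₀ hv₀σ hv₀ne
  have hgs : ∀ v : {v // v ∈ s}, 0 ≤ g ((v : M) - y) := by
    intro v
    by_contra hneg
    push_neg at hneg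
    set e : ℝ := -g ((v : M) - y) with he
    have he0 : 0 < e := by rw [he]; linarith
    have hgb₀ : u' < g (‖v₀‖⁻¹ • v₀) := by
      have := hgBR _ (Set.add_mem_add hb₀B hR0)
      rwa [add_zero] at this
    set t : ℝ := (g (‖v₀‖⁻¹ • v₀) - u' + 1) / e with ht
    have ht0 : 0 ≤ t := le_of_lt (div_pos (by linarith) he0)
    have hmemR : t • ((v : M) - y) ∈ R := by
      refine ⟨fun i => if i = v then t else 0, fun i _ => by dsimp only; split <;> simp [ht0], ?_⟩
      have hterm : ∀ i : {v' // v' ∈ s},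
          (if i = v then t else 0) • wdir i = if i = v then t • wdir i else 0 := by
        intro i; split <;> simp
      rw [Finset.sum_congr rfl fun i _ => hterm i,
        Finset.sum_ite_eq' Finset.univ v (fun i => t • wdir i)]
      simp [hwdir]
    have h2 := hgBR _ (Set.add_mem_add hb₀B hmemR)
    have hte : t * e = g (‖v₀‖⁻¹ • v₀) - u' + 1 := div_mul_cancel₀ _ he0.ne'
    have h3 : t * g ((v : M) - y) = -(t * e) := by rw [he]; ring
    simp only [map_add, map_smul, smul_eq_mul] at h2 hte
    linarith [h2, hte, h3]
  have hgC : ∀ c ∈ C, g y ≤ g c := by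
    have hsub : (s : Set M) ⊆ {z | g y ≤ g z} := by
      intro v hv
      have := hgs ⟨v, hv⟩
      rw [map_sub] at this
      simpa using this
    have hconv : Convex ℝ {z : M | g y ≤ g z} :=
      convex_halfSpace_ge ⟨fun a b => map_add g a b, fun c a => map_smul g c a⟩ (g y)
    intro c hc
    exact convexHull_min hsub hconv (hC ▸ hc)
  -- assemble the face
  set ℓF : M →ₗ[ℝ] ℝ := -(g.toLinearMap) with hℓF
  set rr : ℝ := ℓF y with hrr
  have hℓFval : ∀ z, ℓF z = -(g z) := fun z => rfl
  have hℓFC : ∀ z ∈ C, ℓF z ≤ rr := by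
    intro z hz
    rw [hℓFval, hrr, hℓFval]
    have := hgC z hz
    linarith
  have hℓFσ : ∀ v ∈ σ, ℓF v ≤ 0 := by
    intro v hv
    rcases eq_or_ne v 0 with rfl | hne
    · simp [hℓFval]
    · have := hgσ v hv hne
      rw [hℓFval]
      linarith
  have hℓFσs : ∀ v ∈ σ, v ≠ 0 → ℓF v < 0 := by
    intro v hv hne
    have := hgσ v hv hne
    rw [hℓFval]
    linarith
  have hP : ∀ z ∈ C + σ, ℓF z ≤ rr := by
    rintro z ⟨c, hcC, v, hvσ, rfl⟩
    rw [map_add]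
    have h1 := hℓFC c hcC
    have h2 := hℓFσ v hvσ
    linarith
  have hFeq : {z ∈ C | ℓF z = rr} = {z ∈ C + σ | ℓF z = rr} := by
    ext z
    constructor
    · rintro ⟨hzC, hzr⟩
      exact ⟨⟨z, hzC, 0, hσ0, add_zero z⟩, hzr⟩
    · rintro ⟨⟨c, hcC, v, hvσ, rfl⟩, hzr⟩
      have h1 := hℓFC c hcC
      have h2 := hℓFσ v hvσ
      rw [map_add] at hzr
      have hv0 : v = 0 := by
        by_contra hne
        have := hℓFσs v hvσ hne
        linarith
      rw [hv0, map_zero, add_zero] at hzr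
      show c + v ∈ {z | z ∈ C ∧ ℓF z = rr}
      rw [hv0, add_zero]
      exact ⟨hcC, hzr⟩
  exact ⟨{z ∈ C | ℓF z = rr}, Or.inr ⟨ℓF, rr, hℓFC, rfl⟩, Or.inr ⟨ℓF, rr, hP, hFeq⟩,
    y, ⟨hyC, rfl⟩, hyσ⟩
end

section
/- Let V be a 2-dimensional real vector space with basis c, f and symmetric bilinear form determined by c·c = −e, c·f = 1, f·f = 0, where e > 0. Fix integers m, n with 0 < m·e < n and a real a > 0. Set L = m·c + n·f and H = (m²ea/(2nm − m²e))·c + ((2n(n − me) + m²e²)a/(2nm − m²e))·f. Then: (i) L·L = 2mn − m²e > 0; (ii) 2((L·H)/(L·L))·L − H = a·c + a·e·f; and (iii) (a·c + a·e·f)·c = 0. -/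
/-- The key computation on the Hirzebruch surface in the proof of Theorem 6.1:
with `c·c = −e`, `c·f = 1`, `f·f = 0`, `0 < me < n`, `a > 0`,
`L = m c + n f` and the explicit `H`, one has `L² = 2mn − m²e > 0`,
`2(L·H/L²)L − H = a c + a e f`, and `(a c + a e f)·c = 0`. -/
theorem stmt12 (V : Type*) [AddCommGroup V] [Module ℝ V]
    (q : LinearMap.BilinForm ℝ V) (hsym : ∀ x y, q x y = q y x)
    (c f : V) (hbasis : ∃ b : Module.Basis (Fin 2) ℝ V, b 0 = c ∧ b 1 = f)
    (e : ℝ) (he : 0 < e)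
    (hcc : q c c = -e) (hcf : q c f = 1) (hff : q f f = 0)
    (m n : ℤ) (hme : 0 < (m : ℝ) * e) (hmen : (m : ℝ) * e < (n : ℝ))
    (a : ℝ) (ha : 0 < a)
    (L H : V)
    (hL : L = (m : ℝ) • c + (n : ℝ) • f)
    (hH : H = ((m : ℝ) ^ 2 * e * a / (2 * (n : ℝ) * (m : ℝ) - (m : ℝ) ^ 2 * e)) • c
        + ((2 * (n : ℝ) * ((n : ℝ) - (m : ℝ) * e) + (m : ℝ) ^ 2 * e ^ 2) * a
            / (2 * (n : ℝ) * (m : ℝ) - (m : ℝ) ^ 2 * e)) • f) :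
    (q L L = 2 * (m : ℝ) * (n : ℝ) - (m : ℝ) ^ 2 * e ∧ 0 < q L L)
    ∧ (2 * (q L H / q L L)) • L - H = a • c + (a * e) • f
    ∧ q (a • c + (a * e) • f) c = 0 := by
  have hfc : q f c = 1 := by rw [hsym]; exact hcf
  have hm : 0 < (m : ℝ) := by nlinarith
  have hD : 0 < 2 * (n : ℝ) * (m : ℝ) - (m : ℝ) ^ 2 * e := by nlinarith
  have hqLL : q L L = 2 * (m : ℝ) * (n : ℝ) - (m : ℝ) ^ 2 * e := by
    rw [hL]
    simp only [map_add, map_smul, LinearMap.add_apply, LinearMap.smul_apply, hcc, hcf, hfc, hff,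
      smul_eq_mul]
    ring
  have hqLH : q L H = (m : ℝ) * a * (n : ℝ) * (2 * (n : ℝ) - (m : ℝ) * e)
      / (2 * (n : ℝ) * (m : ℝ) - (m : ℝ) ^ 2 * e) := by
    rw [hL, hH]
    simp only [map_add, map_smul, LinearMap.add_apply, LinearMap.smul_apply, hcc, hcf, hfc, hff,
      smul_eq_mul]
    field_simp
    ring
  refine ⟨⟨hqLL, by rw [hqLL]; nlinarith⟩, ?_, ?_⟩
  · have hD' : 2 * (n : ℝ) * (m : ℝ) - (m : ℝ) ^ 2 * e ≠ 0 := hD.ne'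
    have hD2 : 2 * (m : ℝ) * (n : ℝ) - (m : ℝ) ^ 2 * e ≠ 0 := by
      intro h; exact hD' (by linarith)
    have hs : 2 * (q L H / q L L)
        = 2 * a * (n : ℝ) / (2 * (n : ℝ) * (m : ℝ) - (m : ℝ) ^ 2 * e) := by
      rw [hqLH, hqLL]
      field_simp
    have hD3 : (n : ℝ) * 2 - (m : ℝ) * e ≠ 0 := by intro h; linarith
    rw [hs, hL, hH]
    match_scalars <;> field_simp <;> ring_nf <;> field_simp
  · simp only [map_add, map_smul, LinearMap.add_apply, LinearMap.smul_apply, hcc, hfc,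
      smul_eq_mul]
    ring
end

section
/- Let V be a real vector space with symmetric bilinear form (x·y) satisfying the Hodge index property (x·x > 0 and x·y = 0 imply y·y ≤ 0). Let L, H, C ∈ V with L·L > 0, L·H > 0, B := ((L·H)/(L·L))L − H ≠ 0, B·B < 0, and suppose (2((L·H)/(L·L))L − H)·(2((L·H)/(L·L))L − H) ≥ 0 and H·(L − C) ≥ 0 and (2((L·H)/(L·L))L − H)·C ≥ 0. Then 2(C·L)(L·H) − (C·H)(L·L) − (L·H)(C·C) ≥ (L·L)(L·H)·((C·L)/(L·L) + (C·B)/(H·L))·(1 − (C·L)/(L·L) + (C·B)/(H·L)), and the right-hand side is a product of two nonnegative factors. -/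
set_option maxHeartbeats 1000000 in
/-- Refined quantitative version of Proposition 5.1 (Remark 5.2). -/
theorem stmt13 (V : Type*) [AddCommGroup V] [Module ℝ V]
    (q : LinearMap.BilinForm ℝ V) (hsym : ∀ x y, q x y = q y x)
    (hodge : ∀ x y, 0 < q x x → q x y = 0 → q y y ≤ 0)
    (L H C : V)
    (hLL : 0 < q L L) (hLH : 0 < q L H)
    (B : V) (hB : B = (q L H / q L L) • L - H)
    (hBne : B ≠ 0) (hBB : q B B < 0)
    (hAA : 0 ≤ q ((2 * (q L H / q L L)) • L - H) ((2 * (q L H / q L L)) • L - H))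
    (hHLC : 0 ≤ q H (L - C))
    (hAC : 0 ≤ q ((2 * (q L H / q L L)) • L - H) C) :
    2 * q C L * q L H - q C H * q L L - q L H * q C C
        ≥ q L L * q L H * (q C L / q L L + q C B / q H L)
            * (1 - q C L / q L L + q C B / q H L)
      ∧ 0 ≤ q C L / q L L + q C B / q H L
      ∧ 0 ≤ 1 - q C L / q L L + q C B / q H L := by
  have ha := hLL
  have hh := hLH
  have ha' : q L L ≠ 0 := ne_of_gt ha
  have hh' : q L H ≠ 0 := ne_of_gt hh
  have hqHL : q H L = q L H := hsym H L
  have hqLC : q L C = q C L := hsym L C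
  have hqHC : q H C = q C H := hsym H C
  have hqLB : q L B = 0 := by
    rw [hB]; simp [map_sub, map_smul, smul_eq_mul, hqHL]
    field_simp; ring
  have hqBL : q B L = 0 := by rw [hsym]; exact hqLB
  have hCB : q C B = (q L H / q L L) * q C L - q C H := by
    rw [hB]; simp [map_sub, map_smul, smul_eq_mul]
  have hqBC : q B C = q C B := hsym B C
  -- b relation: q B B = q H H - (q L H)^2 / q L L
  have hBBeq : q B B = q H H - (q L H)^2 / q L L := by
    rw [hB]; simp [map_sub, map_smul, LinearMap.sub_apply, LinearMap.smul_apply,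
      smul_eq_mul, hqHL]
    field_simp; ring
  have hAAeq : q ((2 * (q L H / q L L)) • L - H) ((2 * (q L H / q L L)) • L - H)
      = q H H := by
    simp [map_sub, map_smul, LinearMap.sub_apply, LinearMap.smul_apply,
      smul_eq_mul, hqHL]
    field_simp; ring
  have hab : 0 ≤ (q L H)^2 / q L L + q B B := by
    rw [hBBeq]; rw [hAAeq] at hAA; linarith
  have hACeq : q ((2 * (q L H / q L L)) • L - H) C
      = q L H * (q C L / q L L + q C B / q L H) := by
    simp [map_sub, map_smul, LinearMap.sub_apply, LinearMap.smul_apply,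
      smul_eq_mul, hqLC, hqHC, hCB]
    field_simp; ring
  have hF1 : 0 ≤ q C L / q L L + q C B / q L H := by
    rw [hACeq] at hAC
    by_contra hn; push_neg at hn
    nlinarith [mul_pos hh (neg_pos.mpr hn)]
  have hHLCeq : q H (L - C) = q L H * (1 - q C L / q L L + q C B / q L H) := by
    simp [map_sub, hqHL, hqHC, hCB]
    field_simp; ring
  have hF2 : 0 ≤ 1 - q C L / q L L + q C B / q L H := by
    rw [hHLCeq] at hHLC
    by_contra hn; push_neg at hn
    nlinarith [mul_pos hh (neg_pos.mpr hn)]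
  -- Hodge bound
  have hb' : q B B ≠ 0 := ne_of_lt hBB
  set D : V := C - (q C L / q L L) • L - (q C B / q B B) • B with hD
  have hLD : q L D = 0 := by
    simp [hD, map_sub, map_smul, smul_eq_mul, hqLC, hqLB]
    field_simp; ring
  have hDD : q D D ≤ 0 := hodge L D hLL hLD
  have hDDeq : q D D = q C C - (q C L)^2 / q L L - (q C B)^2 / q B B := by
    simp [hD, map_sub, map_smul, LinearMap.sub_apply, LinearMap.smul_apply,
      smul_eq_mul, hqLC, hqLB, hqBL, hqBC, hsym B L]
    field_simp; ring
  have hCCle : q C C ≤ (q C L)^2 / q L L + (q C B)^2 / q B B := by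
    rw [hDDeq] at hDD; linarith
  have hCH : q C H = q L H / q L L * q C L - q C B := by linarith [hCB]
  refine ⟨?_, by rwa [hqHL], by rwa [hqHL]⟩
  rw [hqHL, hCH]
  have hid : 2 * q C L * q L H - (q L H / q L L * q C L - q C B) * q L L
        - q L H * q C C
      - q L L * q L H * (q C L / q L L + q C B / q L H)
          * (1 - q C L / q L L + q C B / q L H)
      = q L H * ((q C L)^2 / q L L + (q C B)^2 / q B B - q C C)
        + (q C B)^2 * ((q L H)^2 / q L L + q B B)
            * (-(q L L / (q B B * q L H))) := by
    field_simp; ring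
  have hneg : q B B * q L H < 0 := mul_neg_of_neg_of_pos hBB hh
  have hdivle : q L L / (q B B * q L H) ≤ 0 :=
    div_nonpos_of_nonneg_of_nonpos ha.le hneg.le
  have t1 : 0 ≤ q L H * ((q C L)^2 / q L L + (q C B)^2 / q B B - q C C) :=
    mul_nonneg hh.le (by linarith)
  have t2 : 0 ≤ (q C B)^2 * ((q L H)^2 / q L L + q B B)
      * (-(q L L / (q B B * q L H))) :=
    mul_nonneg (mul_nonneg (sq_nonneg _) hab) (by linarith)
  linarith [hid, t1, t2]
end
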